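/- arXiv:2301.06112 — 2 statements merged into one kernel-verified Lean document; each statement's English description precedes it below -/
import Mathlib

section
/- Let Δ be an N×N matrix with integer entries and let 0 < ε < 1. Let N_ε be the number of eigenvalues λ of Δ (counted with multiplicity) with 0 < |λ| ≤ ε. Then N_ε / N ≤ log‖Δ‖ / log(ε⁻¹), where ‖Δ‖ denotes the operator norm of Δ (assumed > 1). -/
open Polynomial Multiset

private lemma multiset_prod_le_pow_card_real (s : Multiset ℝ) (c : ℝ) (hc : 0 ≤ c)
    (h0 : ∀ x ∈ s, 0 ≤ x) (h : ∀ x ∈ s, x ≤ c) : s.prod ≤ c ^ Multiset.card s := by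
  induction s using Multiset.induction with
  | empty => simp
  | cons a t ih =>
    simp only [Multiset.prod_cons, Multiset.card_cons, pow_succ]
    have ha0 := h0 a (Multiset.mem_cons_self a t)
    have hat := h a (Multiset.mem_cons_self a t)
    have ht := ih (fun x hx => h0 x (Multiset.mem_cons_of_mem hx))
      (fun x hx => h x (Multiset.mem_cons_of_mem hx))
    have hprod0 : 0 ≤ t.prod :=
      Multiset.prod_nonneg (fun x hx => h0 x (Multiset.mem_cons_of_mem hx))
    calc a * t.prod ≤ c * (c ^ Multiset.card t) := mul_le_mul hat ht hprod0 hc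
      _ = c ^ Multiset.card t * c := mul_comm _ _

private lemma matrix_root_mem_spectrum {n : ℕ} (M : Matrix (Fin n) (Fin n) ℂ) {μ : ℂ}
    (h : μ ∈ M.charpoly.roots) : μ ∈ spectrum ℂ M := by
  have hroot : M.charpoly.eval μ = 0 := Polynomial.isRoot_of_mem_roots h
  rw [spectrum.mem_iff]
  intro hunit
  rw [Matrix.isUnit_iff_isUnit_det, isUnit_iff_ne_zero] at hunit
  apply hunit
  have h1 : M.charpoly.eval μ
      = (Polynomial.eval (Matrix.scalar (Fin n) μ) (matPolyEquiv (Matrix.charmatrix M))).det :=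
    eval_det _ _
  rw [Matrix.matPolyEquiv_charmatrix, Polynomial.eval_sub, Polynomial.eval_X,
    Polynomial.eval_C] at h1
  have h2 : algebraMap ℂ (Matrix (Fin n) (Fin n) ℂ) μ = Matrix.scalar (Fin n) μ := rfl
  rw [h2, ← h1, hroot]

/-- Let `Δ` be an `N × N` integer matrix and `0 < ε < 1`.  If `N_ε` denotes the number of
complex eigenvalues `λ` of `Δ` (counted with algebraic multiplicity, i.e. as roots of the
characteristic polynomial over `ℂ`) with `0 < |λ| ≤ ε`, and the operator (spectral) norm
`‖Δ‖` is `> 1`, then `N_ε / N ≤ log ‖Δ‖ / log (ε⁻¹)`. -/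
theorem stmt0 (N : ℕ) (Δ : Matrix (Fin N) (Fin N) ℤ) (ε : ℝ) (hε0 : 0 < ε) (hε1 : ε < 1)
    (hnorm : 1 < ‖Matrix.toEuclideanCLM (𝕜 := ℂ) (Δ.map (fun a => (a : ℂ)))‖) :
    (Multiset.card
        ((Δ.map (fun a => (a : ℂ))).charpoly.roots.filter
          (fun lam => 0 < ‖lam‖ ∧ ‖lam‖ ≤ ε)) : ℝ) / (N : ℝ) ≤
      Real.log ‖Matrix.toEuclideanCLM (𝕜 := ℂ) (Δ.map (fun a => (a : ℂ)))‖ /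
        Real.log ε⁻¹ := by
  rcases Nat.eq_zero_or_pos N with hN | hN
  · exfalso
    subst hN
    have h0 : (Matrix.toEuclideanCLM (𝕜 := ℂ) (Δ.map (fun a => (a : ℂ)))) = 0 :=
      Subsingleton.elim _ _
    rw [h0, norm_zero] at hnorm
    linarith
  classical
  set M := Δ.map (fun a => (a : ℂ)) with hM
  set T := ‖Matrix.toEuclideanCLM (𝕜 := ℂ) M‖ with hT
  have hT1 : (1 : ℝ) < T := hnorm
  have hT0 : (0 : ℝ) < T := lt_trans one_pos hT1
  set p := M.charpoly with hp
  set S := p.roots.filter (fun lam => 0 < ‖lam‖ ∧ ‖lam‖ ≤ ε) with hS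
  -- spectral bound on roots
  have hroot_le : ∀ μ ∈ p.roots, ‖μ‖ ≤ T := by
    intro μ hμ
    haveI : Nonempty (Fin N) := ⟨⟨0, hN⟩⟩
    have hmem : μ ∈ spectrum ℂ (Matrix.toEuclideanCLM (𝕜 := ℂ) M) := by
      rw [AlgEquiv.spectrum_eq (Matrix.toEuclideanCLM (𝕜 := ℂ) (n := Fin N))]
      exact matrix_root_mem_spectrum M hμ
    simpa using spectrum.norm_le_norm_of_mem hmem
  -- product of nonzero roots has absolute value ≥ 1
  have hmonic : p.Monic := Matrix.charpoly_monic M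
  have hsplit : p.Splits := IsAlgClosed.splits p
  set k := p.roots.count 0 with hk
  set R' := p.roots.filter (· ≠ 0) with hR'
  have hsplit2 : p.roots.filter (· = 0) + R' = p.roots := by
    rw [hR']
    simpa using Multiset.filter_add_not (· = 0) p.roots
  have hrepl : p.roots.filter (· = 0) = Multiset.replicate k 0 := Multiset.filter_eq' _ _
  have hfact : p = (p.roots.map (fun r => X - C r)).prod :=
    hsplit.eq_prod_roots_of_monic hmonic
  set q := (R'.map (fun r => X - C r)).prod with hq
  have hfact2 : p = X ^ k * q := by
    conv_lhs => rw [hfact, ← hsplit2]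
    rw [Multiset.map_add, Multiset.prod_add, hrepl]
    simp [Multiset.map_replicate, Multiset.prod_replicate, hq]
  have hcoeff : p.coeff k = q.eval 0 := by
    rw [hfact2, ← Polynomial.coeff_zero_eq_eval_zero]
    simpa using Polynomial.coeff_X_pow_mul q k 0
  have heval : q.eval 0 = (R'.map (fun r => -r)).prod := by
    rw [hq, Polynomial.eval_multiset_prod, Multiset.map_map]
    simp
  have hint : p = (Δ.charpoly).map (Int.castRingHom ℂ) := by
    rw [hp, hM]
    have : (fun a : ℤ => (a : ℂ)) = ⇑(Int.castRingHom ℂ) := rfl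
    rw [this]
    exact Matrix.charpoly_map Δ (Int.castRingHom ℂ)
  have hcast : p.coeff k = ((Δ.charpoly.coeff k : ℤ) : ℂ) := by
    rw [hint, Polynomial.coeff_map]; rfl
  have hne : p.coeff k ≠ 0 := by
    rw [hcoeff, heval]
    refine Multiset.prod_ne_zero ?_
    simp only [Multiset.mem_map]
    rintro ⟨r, hr, hr0⟩
    rw [hR', Multiset.mem_filter] at hr
    exact hr.2 (by simpa [neg_eq_zero] using hr0.symm)
  have hz : Δ.charpoly.coeff k ≠ 0 := by
    intro h0; apply hne; rw [hcast, h0]; simp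
  have hbig : (1 : ℝ) ≤ (R'.map (fun r => ‖r‖)).prod := by
    calc (1:ℝ) ≤ ‖p.coeff k‖ := by
          rw [hcast, Complex.norm_intCast]
          exact_mod_cast Int.one_le_abs hz
      _ = (R'.map (fun r => ‖r‖)).prod := by
          rw [hcoeff, heval]; change (normHom : ℂ →*₀ ℝ) _ = _; rw [map_multiset_prod, Multiset.map_map]
          congr 1
          apply Multiset.map_congr rfl
          intro r _
          simp [map_neg]
  -- split R' into small and big roots
  set B := R'.filter (fun r => ¬ ‖r‖ ≤ ε) with hB
  have hSR : S = R'.filter (fun r => ‖r‖ ≤ ε) := by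
    rw [hR', Multiset.filter_filter, hS]
    apply Multiset.filter_congr
    intro r hr
    simp [norm_pos_iff, and_comm]
  have hSB : S + B = R' := by
    rw [hSR, hB]
    exact Multiset.filter_add_not _ _
  -- bound products
  have hSprod : (S.map (fun r => ‖r‖)).prod ≤ ε ^ Multiset.card S := by
    have := multiset_prod_le_pow_card_real (S.map (fun r => ‖r‖)) ε (le_of_lt hε0)
      (by rintro x hx; obtain ⟨r, _, rfl⟩ := Multiset.mem_map.mp hx; exact norm_nonneg _)
      (by rintro x hx
          obtain ⟨r, hr, rfl⟩ := Multiset.mem_map.mp hx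
          rw [hS, Multiset.mem_filter] at hr
          exact hr.2.2)
    simpa using this
  have hBprod : (B.map (fun r => ‖r‖)).prod ≤ T ^ Multiset.card B := by
    have := multiset_prod_le_pow_card_real (B.map (fun r => ‖r‖)) T (le_of_lt hT0)
      (by rintro x hx; obtain ⟨r, _, rfl⟩ := Multiset.mem_map.mp hx; exact norm_nonneg _)
      (by rintro x hx
          obtain ⟨r, hr, rfl⟩ := Multiset.mem_map.mp hx
          rw [hB, Multiset.mem_filter] at hr
          have hr' : r ∈ p.roots := Multiset.mem_of_mem_filter (hR' ▸ hr.1)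
          exact hroot_le r hr')
    simpa using this
  have hcardB : Multiset.card B ≤ N := by
    have h1 : Multiset.card R' ≤ Multiset.card p.roots :=
      Multiset.card_le_card (Multiset.filter_le _ _)
    have h2 : Multiset.card p.roots ≤ p.natDegree := Polynomial.card_roots' p
    have h3 : p.natDegree = N := by
      rw [hp]
      simpa using Matrix.charpoly_natDegree_eq_dim M
    have h4 : Multiset.card B ≤ Multiset.card R' := by
      rw [← hSB]; simp
    omega
  -- main inequality
  have hkey : (1 : ℝ) ≤ ε ^ Multiset.card S * T ^ N := by
    have h1 : (R'.map (fun r => ‖r‖)).prod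
        = (S.map (fun r => ‖r‖)).prod * (B.map (fun r => ‖r‖)).prod := by
      rw [← hSB, Multiset.map_add, Multiset.prod_add]
    have hSnn : 0 ≤ (S.map (fun r => ‖r‖)).prod :=
      Multiset.prod_nonneg (by rintro x hx; obtain ⟨r, _, rfl⟩ := Multiset.mem_map.mp hx
                               exact norm_nonneg _)
    have hBnn : 0 ≤ (B.map (fun r => ‖r‖)).prod :=
      Multiset.prod_nonneg (by rintro x hx; obtain ⟨r, _, rfl⟩ := Multiset.mem_map.mp hx
                               exact norm_nonneg _)
    have hTpow : T ^ Multiset.card B ≤ T ^ N := pow_le_pow_right₀ (le_of_lt hT1) hcardB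
    calc (1:ℝ) ≤ (R'.map (fun r => ‖r‖)).prod := hbig
      _ = (S.map (fun r => ‖r‖)).prod * (B.map (fun r => ‖r‖)).prod := h1
      _ ≤ (ε ^ Multiset.card S) * (T ^ Multiset.card B) :=
          mul_le_mul hSprod hBprod hBnn (pow_nonneg (le_of_lt hε0) _)
      _ ≤ (ε ^ Multiset.card S) * (T ^ N) := by
          exact mul_le_mul_of_nonneg_left hTpow (pow_nonneg (le_of_lt hε0) _)
  -- take logarithms
  have hεpow : (0:ℝ) < ε ^ Multiset.card S := pow_pos hε0 _
  have hTpow : (0:ℝ) < T ^ N := pow_pos hT0 _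
  have hlog : 0 ≤ (Multiset.card S : ℝ) * Real.log ε + (N : ℝ) * Real.log T := by
    have := Real.log_nonneg hkey
    rwa [Real.log_mul (ne_of_gt hεpow) (ne_of_gt hTpow), Real.log_pow, Real.log_pow] at this
  have hlogε : Real.log ε = - Real.log ε⁻¹ := by rw [Real.log_inv]; ring
  have hlogεinv : 0 < Real.log ε⁻¹ := Real.log_pos ((one_lt_inv₀ hε0).2 hε1)
  have hNpos : (0:ℝ) < (N : ℝ) := by exact_mod_cast hN
  rw [div_le_div_iff₀ hNpos hlogεinv]
  rw [hlogε] at hlog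
  nlinarith [hlog]
end

section
/- Let G be a graph product of groups over a finite flag complex (equivalently, a finite simplicial graph) with vertex groups {G_s}, and for each vertex s let H_s ≤ G_s be a subgroup. Then the graph product H of the groups {H_s} over the same graph embeds as a subgroup of G via the natural map. -/
open Monoid
open scoped commutatorElement

/-- The graph product of a family of groups `G i` over a (simple) graph `Γ`: the quotient
of the free product by the relations `⁅g, g'⁆ = 1` for `g ∈ G i`, `g' ∈ G j` with `i, j`
adjacent in `Γ`. -/
def GraphProduct {ι : Type*} (Γ : SimpleGraph ι) (G : ι → Type*) [∀ i, Group (G i)] :=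
  CoprodI G ⧸ Subgroup.normalClosure
    {x : CoprodI G | ∃ (i j : ι) (a : G i) (b : G j), Γ.Adj i j ∧
      x = ⁅CoprodI.of a, CoprodI.of b⁆}

instance {ι : Type*} (Γ : SimpleGraph ι) (G : ι → Type*) [∀ i, Group (G i)] :
    Group (GraphProduct Γ G) := by
  delta GraphProduct; infer_instance

/-- The canonical map from a vertex group to the graph product. -/
def GraphProduct.of {ι : Type*} (Γ : SimpleGraph ι) (G : ι → Type*) [∀ i, Group (G i)]
    (i : ι) : G i →* GraphProduct Γ G :=
  (QuotientGroup.mk' _).comp CoprodI.of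


set_option linter.unusedSectionVars false
namespace GPAux
open scoped Classical

/-- Splitting lemma for a list written in two ways with one distinguished middle element. -/
theorem cons_middle_cases {α : Type*} {a b p q : List α} {l m : α}
    (h : a ++ l :: b = p ++ m :: q) :
    (∃ t, p = a ++ l :: t ∧ b = t ++ m :: q) ∨ (a = p ∧ l = m ∧ b = q) ∨
      (∃ t, a = p ++ m :: t ∧ q = t ++ l :: b) := by
  induction a generalizing p with
  | nil =>
    cases p with
    | nil => simp_all
    | cons x p' =>
      simp only [List.nil_append, List.cons_append, List.cons.injEq] at h
      exact Or.inl ⟨p', by simp [h.1, h.2], h.2⟩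
  | cons x a' ih =>
    cases p with
    | nil =>
      simp only [List.cons_append, List.nil_append, List.cons.injEq] at h
      exact Or.inr (Or.inr ⟨a', by simp [h.1, h.2], h.2.symm⟩)
    | cons y p' =>
      simp only [List.cons_append, List.cons.injEq] at h
      rcases ih h.2 with ⟨t, h1, h2⟩ | ⟨h1, h2, h3⟩ | ⟨t, h1, h2⟩
      · exact Or.inl ⟨t, by simp [h.1, h1], h2⟩
      · exact Or.inr (Or.inl ⟨by simp [h.1, h1], h2, h3⟩)
      · exact Or.inr (Or.inr ⟨t, by simp [h.1, h1], h2⟩)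

variable {ι : Type*} (Γ : SimpleGraph ι)

/-- A vertex list is bad if it contains two occurrences of a vertex `i` separated only by
vertices adjacent to `i`. -/
def Bad (V : List ι) : Prop :=
  ∃ (i : ι) (c d e : List ι), V = c ++ i :: (d ++ i :: e) ∧ ∀ j ∈ d, Γ.Adj i j

/-- `i` occurs in `V` preceded only by vertices adjacent to `i`. -/
def HasHeadV (i : ι) (V : List ι) : Prop :=
  ∃ c d, V = c ++ i :: d ∧ ∀ j ∈ c, Γ.Adj i j

theorem bad_cons {V : List ι} {i : ι} (h : Bad Γ V) : Bad Γ (i :: V) := by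
  obtain ⟨j, c, d, e, rfl, hd⟩ := h
  exact ⟨j, i :: c, d, e, rfl, hd⟩

theorem not_bad_cons {V : List ι} {i : ι} (h1 : ¬ Bad Γ V) (h2 : ¬ HasHeadV Γ i V) :
    ¬ Bad Γ (i :: V) := by
  rintro ⟨j, c, d, e, hV, hd⟩
  cases c with
  | nil =>
    rw [List.nil_append] at hV
    injection hV with e1 e2
    subst e1
    exact h2 ⟨d, e, e2, hd⟩
  | cons x c' =>
    rw [List.cons_append] at hV
    injection hV with e1 e2
    exact h1 ⟨j, c', d, e, e2, hd⟩

theorem bad_insert {A B : List ι} {i : ι} (hA : ∀ j ∈ A, Γ.Adj i j)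
    (h : Bad Γ (A ++ B)) : Bad Γ (A ++ i :: B) := by
  obtain ⟨j, c, d, e, hV, hd⟩ := h
  rw [List.append_eq_append_iff] at hV
  rcases hV with ⟨k, hc, hB⟩ | ⟨k, hA', hk⟩
  · exact ⟨j, A ++ i :: k, d, e, by simp [hc, hB], hd⟩
  · cases k with
    | nil =>
      rw [List.nil_append] at hk
      exact ⟨j, c ++ [i], d, e, by simp [hA', ← hk], hd⟩
    | cons x k' =>
      rw [List.cons_append] at hk  -- wrong shape; use injection below
      injection hk with e1 e2
      subst e1
      have hji : Γ.Adj j i := (hA j (by simp [hA'])).symm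
      rw [List.append_eq_append_iff] at e2
      rcases e2 with ⟨m, hk', hB⟩ | ⟨m, hd', hB⟩
      · cases m with
        | nil =>
          rw [List.nil_append] at hB
          refine ⟨j, c, d ++ [i], e, ?_, ?_⟩
          · simp [hA', hk', ← hB]
          · intro x hx
            rcases List.mem_append.1 hx with hx | hx
            · exact hd x hx
            · simp only [List.mem_singleton] at hx; exact hx ▸ hji
        | cons y m' =>
          injection hB with e1 e2
          subst e1
          exact ⟨j, c, d, m' ++ i :: B, by simp [hA', hk', e2], hd⟩
      · refine ⟨j, c, k' ++ i :: m, e, ?_, ?_⟩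
        · simp [hA', hB, hd']
        · intro x hx
          simp only [List.mem_append, List.mem_cons] at hx
          rcases hx with hx | hx | hx
          · exact hd x (by simp [hd', hx])
          · exact hx ▸ hji
          · exact hd x (by simp [hd', hx])

theorem not_hasHeadV_delete {A B : List ι} {i j : ι} (hji : Γ.Adj j i)
    (h : ¬ HasHeadV Γ j (A ++ i :: B)) : ¬ HasHeadV Γ j (A ++ B) := by
  rintro ⟨c, d, hV, hc⟩
  rw [List.append_eq_append_iff] at hV
  rcases hV with ⟨k, hc', hB⟩ | ⟨k, hA, hk⟩
  · refine h ⟨A ++ i :: k, d, by simp [hB], ?_⟩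
    intro x hx
    simp only [List.mem_append, List.mem_cons] at hx
    rcases hx with hx | hx | hx
    · exact hc x (by simp [hc', hx])
    · exact hx ▸ hji
    · exact hc x (by simp [hc', hx])
  · cases k with
    | nil =>
      rw [List.nil_append] at hk
      refine h ⟨c ++ [i], d, by simp [hA, ← hk], ?_⟩
      intro x hx
      rcases List.mem_append.1 hx with hx | hx
      · exact hc x hx
      · simp only [List.mem_singleton] at hx; exact hx ▸ hji
    | cons x k' =>
      rw [List.cons_append] at hk
      injection hk with e1 e2
      subst e1
      exact h ⟨c, k' ++ i :: B, by simp [hA, e2], hc⟩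

theorem not_hasHeadV_of_not_bad {A B : List ι} {i : ι} (hA : ∀ j ∈ A, Γ.Adj i j)
    (h : ¬ Bad Γ (A ++ i :: B)) : ¬ HasHeadV Γ i (A ++ B) := by
  rintro ⟨c, d, hV, hc⟩
  rw [List.append_eq_append_iff] at hV
  rcases hV with ⟨k, hc', hB⟩ | ⟨k, hA', hk⟩
  · exact h ⟨i, A, k, d, by simp [hB, hc'], fun x hx => hc x (by simp [hc', hx])⟩
  · cases k with
    | nil =>
      rw [List.nil_append] at hk
      exact h ⟨i, A, [], d, by simp [hA', ← hk], by simp⟩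
    | cons x k' =>
      rw [List.cons_append] at hk
      injection hk with e1 _
      subst e1
      exact (Γ.loopless.irrefl i (hA i (by simp [hA']))).elim


section Words

variable {ι : Type*} (Γ : SimpleGraph ι) (G : ι → Type*) [∀ i, Group (G i)]

/-- A word: a list of letters, each letter an element of some vertex group. -/
abbrev Word := List ((i : ι) × G i)

variable {G}

/-- The vertex list of a word. -/
def vtx (w : Word G) : List ι := w.map Sigma.fst

@[simp] theorem vtx_nil : vtx ([] : Word G) = [] := rfl
@[simp] theorem vtx_cons (l : (i : ι) × G i) (w : Word G) : vtx (l :: w) = l.1 :: vtx w := rfl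
@[simp] theorem vtx_append (a b : Word G) : vtx (a ++ b) = vtx a ++ vtx b := List.map_append
theorem mem_vtx {j : ι} {w : Word G} : j ∈ vtx w ↔ ∃ l ∈ w, l.1 = j := by
  simp [vtx, List.mem_map]

/-- A word is reduced if all its letters are nontrivial and its vertex list is not bad. -/
def Reduced (w : Word G) : Prop := (∀ l ∈ w, l.2 ≠ (1 : G l.1)) ∧ ¬ Bad Γ (vtx w)

/-- Elementary shuffle: swap two neighbouring letters whose vertices are adjacent. -/
inductive Step : Word G → Word G → Prop
  | swap (p q : Word G) (l₁ l₂ : (i : ι) × G i) (h : Γ.Adj l₁.1 l₂.1) :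
      Step (p ++ l₁ :: l₂ :: q) (p ++ l₂ :: l₁ :: q)

/-- Shuffle equivalence on words. -/
def WEquiv : Word G → Word G → Prop := Relation.ReflTransGen (Step Γ)

theorem Step.symm' {w w' : Word G} (h : Step Γ w w') : Step Γ w' w := by
  cases h with
  | swap p q l₁ l₂ h => exact Step.swap p q l₂ l₁ h.symm

theorem WEquiv.refl' (w : Word G) : WEquiv Γ w w := Relation.ReflTransGen.refl

theorem WEquiv.trans' {w₁ w₂ w₃ : Word G} (h1 : WEquiv Γ w₁ w₂) (h2 : WEquiv Γ w₂ w₃) :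
    WEquiv Γ w₁ w₃ := Relation.ReflTransGen.trans h1 h2

theorem WEquiv.symm' {w w' : Word G} (h : WEquiv Γ w w') : WEquiv Γ w' w := by
  induction h with
  | refl => exact WEquiv.refl' Γ _
  | tail h1 h2 ih => exact Relation.ReflTransGen.trans (Relation.ReflTransGen.single (Step.symm' Γ h2)) ih

theorem Step.wequiv {w w' : Word G} (h : Step Γ w w') : WEquiv Γ w w' :=
  Relation.ReflTransGen.single h

theorem Step.length_eq {w w' : Word G} (h : Step Γ w w') : w.length = w'.length := by
  cases h with
  | swap p q l₁ l₂ h => simp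

theorem WEquiv.length_eq {w w' : Word G} (h : WEquiv Γ w w') : w.length = w'.length := by
  induction h with
  | refl => rfl
  | tail h1 h2 ih => exact ih.trans (Step.length_eq Γ h2)

theorem WEquiv.eq_nil {w : Word G} (h : WEquiv Γ w []) : w = [] :=
  List.length_eq_zero_iff.1 (WEquiv.length_eq Γ h)

theorem Step.cons {w w' : Word G} (l : (i : ι) × G i) (h : Step Γ w w') :
    Step Γ (l :: w) (l :: w') := by
  cases h with
  | swap p q l₁ l₂ h =>
    have := Step.swap (G := G) (l :: p) q l₁ l₂ h
    simpa using this

theorem WEquiv.cons {w w' : Word G} (l : (i : ι) × G i) (h : WEquiv Γ w w') :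
    WEquiv Γ (l :: w) (l :: w') := by
  induction h with
  | refl => exact WEquiv.refl' Γ _
  | tail h1 h2 ih => exact Relation.ReflTransGen.tail ih (Step.cons Γ l h2)

theorem WEquiv.append_left (p : Word G) {w w' : Word G} (h : WEquiv Γ w w') :
    WEquiv Γ (p ++ w) (p ++ w') := by
  induction p with
  | nil => simpa using h
  | cons x p ih => exact WEquiv.cons Γ x ih

/-- A letter adjacent to everything in `a` can be moved across `a`. -/
theorem wequiv_shuffle {i : ι} (x : G i) (a t : Word G) (ha : ∀ l ∈ a, Γ.Adj i l.1) :
    WEquiv Γ (⟨i, x⟩ :: (a ++ t)) (a ++ ⟨i, x⟩ :: t) := by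
  induction a with
  | nil => exact WEquiv.refl' Γ _
  | cons l a ih =>
    have h1 : Step Γ (⟨i, x⟩ :: l :: (a ++ t)) (l :: ⟨i, x⟩ :: (a ++ t)) := by
      have := Step.swap (G := G) [] (a ++ t) ⟨i, x⟩ l (ha l (by simp))
      simpa using this
    refine WEquiv.trans' Γ (Step.wequiv Γ h1) ?_
    exact WEquiv.cons Γ l (ih fun l hl => ha l (by simp [hl]))

/-- `w` decomposes as `a ++ ⟨i,g⟩ :: b` where everything in `a` is adjacent to `i`. -/
def HeadAt (i : ι) (a : Word G) (g : G i) (b w : Word G) : Prop :=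
  w = a ++ ⟨i, g⟩ :: b ∧ ∀ l ∈ a, Γ.Adj i l.1

def HasHead (i : ι) (w : Word G) : Prop := ∃ a g b, HeadAt Γ i a g b w

theorem HeadAt.unique {i : ι} {a a' : Word G} {g g' : G i} {b b' w : Word G}
    (h : HeadAt Γ i a g b w) (h' : HeadAt Γ i a' g' b' w) : a = a' ∧ g = g' ∧ b = b' := by
  obtain ⟨hw, ha⟩ := h
  obtain ⟨hw', ha'⟩ := h'
  have hww : a ++ ⟨i, g⟩ :: b = a' ++ ⟨i, g'⟩ :: b' := hw.symm.trans hw'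
  rcases cons_middle_cases hww with ⟨t, hp, _⟩ | ⟨h1, h2, h3⟩ | ⟨t, hp, _⟩
  · exact absurd (ha' ⟨i, g⟩ (by simp [hp])) (Γ.loopless.irrefl i)
  · exact ⟨h1, sigma_mk_injective h2, h3⟩
  · exact absurd (ha ⟨i, g'⟩ (by simp [hp])) (Γ.loopless.irrefl i)

theorem hasHeadV_of_hasHead {i : ι} {w : Word G} (h : HasHead Γ i w) : HasHeadV Γ i (vtx w) := by
  obtain ⟨a, g, b, rfl, ha⟩ := h
  refine ⟨vtx a, vtx b, by simp, fun j hj => ?_⟩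
  obtain ⟨l, hl, rfl⟩ := mem_vtx.1 hj
  exact ha l hl

theorem vtx_split {w : Word G} {C D : List ι} {i : ι} (h : vtx w = C ++ i :: D) :
    ∃ (a : Word G) (g : G i) (b : Word G), w = a ++ ⟨i, g⟩ :: b ∧ vtx a = C ∧ vtx b = D := by
  induction w generalizing C with
  | nil => simp [vtx] at h
  | cons l w ih =>
    cases C with
    | nil =>
      rw [vtx_cons, List.nil_append] at h
      injection h with h1 h2
      obtain ⟨j, g⟩ := l
      subst h1
      exact ⟨[], g, w, rfl, rfl, h2⟩
    | cons c C' =>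
      rw [vtx_cons, List.cons_append] at h
      injection h with h1 h2
      obtain ⟨a, g, b, rfl, hC, hD⟩ := ih h2
      exact ⟨l :: a, g, b, rfl, by simp [hC, h1], hD⟩

theorem hasHead_of_hasHeadV {i : ι} {w : Word G} (h : HasHeadV Γ i (vtx w)) : HasHead Γ i w := by
  obtain ⟨C, D, hV, hC⟩ := h
  obtain ⟨a, g, b, rfl, rfl, _⟩ := vtx_split hV
  exact ⟨a, g, b, rfl, fun l hl => hC l.1 (mem_vtx.2 ⟨l, hl, rfl⟩)⟩


/-- Multiplication of a reduced word by a letter `x ∈ G i` on the left: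
merge with the first `i`-letter movable to the front, or prepend. -/
noncomputable def sm (i : ι) (x : G i) (w : Word G) : Word G :=
  if h : HasHead Γ i w then
    let a := h.choose
    let g := h.choose_spec.choose
    let b := h.choose_spec.choose_spec.choose
    if x * g = 1 then a ++ b else a ++ ⟨i, x * g⟩ :: b
  else if x = 1 then w else ⟨i, x⟩ :: w

theorem sm_headAt {i : ι} {a : Word G} {g : G i} {b w : Word G}
    (h : HeadAt Γ i a g b w) (x : G i) :
    sm Γ i x w = if x * g = 1 then a ++ b else a ++ ⟨i, x * g⟩ :: b := by
  have hh : HasHead Γ i w := ⟨a, g, b, h⟩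
  have hspec : HeadAt Γ i hh.choose hh.choose_spec.choose hh.choose_spec.choose_spec.choose w :=
    hh.choose_spec.choose_spec.choose_spec
  obtain ⟨h1, h2, h3⟩ := HeadAt.unique Γ hspec h
  subst h1; subst h2; subst h3
  rw [sm, dif_pos hh]

theorem sm_not {i : ι} {w : Word G} (h : ¬ HasHead Γ i w) (x : G i) :
    sm Γ i x w = if x = 1 then w else ⟨i, x⟩ :: w := by
  rw [sm, dif_neg h]

theorem not_hasHead_delete {i : ι} {a : Word G} {g : G i} {b w : Word G}
    (hw : Reduced Γ w) (hd : HeadAt Γ i a g b w) : ¬ HasHead Γ i (a ++ b) := by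
  intro h
  have hv := hasHeadV_of_hasHead Γ h
  rw [vtx_append] at hv
  have hnb : ¬ Bad Γ (vtx a ++ i :: vtx b) := by
    have := hw.2
    rw [hd.1] at this
    simpa using this
  have ha : ∀ j ∈ vtx a, Γ.Adj i j := fun j hj => by
    obtain ⟨l, hl, rfl⟩ := mem_vtx.1 hj; exact hd.2 l hl
  exact not_hasHeadV_of_not_bad Γ ha hnb hv

theorem not_hasHead_delete' {i j : ι} {a : Word G} {g : G i} {b w : Word G}
    (hji : Γ.Adj j i) (hnj : ¬ HasHead Γ j w) (hd : HeadAt Γ i a g b w) :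
    ¬ HasHead Γ j (a ++ b) := by
  intro h
  have hv := hasHeadV_of_hasHead Γ h
  rw [vtx_append] at hv
  have hnjv : ¬ HasHeadV Γ j (vtx w) := fun hh => hnj (hasHead_of_hasHeadV Γ hh)
  rw [hd.1] at hnjv
  simp only [vtx_append, vtx_cons] at hnjv
  exact not_hasHeadV_delete Γ hji hnjv hv

theorem not_hasHead_congr {i : ι} {w w' : Word G} (hv : vtx w = vtx w')
    (h : ¬ HasHead Γ i w) : ¬ HasHead Γ i w' := fun hh =>
  h (hasHead_of_hasHeadV Γ (hv ▸ hasHeadV_of_hasHead Γ hh))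

theorem hasHead_cons {i j : ι} {y : G j} {w : Word G} (hij : j ≠ i)
    (h : HasHead Γ i (⟨j, y⟩ :: w)) : HasHead Γ i w := by
  obtain ⟨a, g, b, hw, ha⟩ := h
  cases a with
  | nil =>
    rw [List.nil_append] at hw
    injection hw with h1 _
    exact absurd (congrArg Sigma.fst h1) hij
  | cons l a' =>
    rw [List.cons_append] at hw
    injection hw with h1 h2
    exact ⟨a', g, b, h2, fun l' hl' => ha l' (by simp [hl'])⟩

theorem reduced_sm {i : ι} (x : G i) {w : Word G} (hw : Reduced Γ w) :
    Reduced Γ (sm Γ i x w) := by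
  by_cases hh : HasHead Γ i w
  · obtain ⟨a, g, b, hd⟩ := hh
    rw [sm_headAt Γ hd x]
    have hmem : ∀ l ∈ a ++ b, l.2 ≠ (1 : G l.1) := by
      intro l hl
      refine hw.1 l ?_
      rw [hd.1]
      rcases List.mem_append.1 hl with hl | hl
      · exact List.mem_append.2 (Or.inl hl)
      · simp [hl]
    have hnb : ¬ Bad Γ (vtx a ++ i :: vtx b) := by
      have := hw.2; rw [hd.1] at this; simpa using this
    have hadj : ∀ j ∈ vtx a, Γ.Adj i j := fun j hj => by
      obtain ⟨l, hl, rfl⟩ := mem_vtx.1 hj; exact hd.2 l hl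
    split_ifs with hxg
    · refine ⟨hmem, ?_⟩
      rw [vtx_append]
      exact fun hb => hnb (bad_insert Γ hadj hb)
    · refine ⟨?_, ?_⟩
      · intro l hl
        rcases List.mem_append.1 hl with hl | hl
        · exact hmem l (List.mem_append.2 (Or.inl hl))
        · rcases List.mem_cons.1 hl with rfl | hl
          · exact hxg
          · exact hmem l (List.mem_append.2 (Or.inr hl))
      · simpa using hnb
  · rw [sm_not Γ hh x]
    split_ifs with hx
    · exact hw
    · refine ⟨?_, ?_⟩
      · intro l hl
        rcases List.mem_cons.1 hl with rfl | hl
        · exact hx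
        · exact hw.1 l hl
      · rw [vtx_cons]
        exact not_bad_cons Γ hw.2 (fun hv => hh (hasHead_of_hasHeadV Γ hv))

theorem sm_one {i : ι} {w : Word G} (hw : Reduced Γ w) : sm Γ i 1 w = w := by
  by_cases hh : HasHead Γ i w
  · obtain ⟨a, g, b, hd⟩ := hh
    rw [sm_headAt Γ hd 1, one_mul, if_neg (hw.1 ⟨i, g⟩ (by rw [hd.1]; simp)), ← hd.1]
  · rw [sm_not Γ hh 1, if_pos rfl]


theorem sm_comm_aux {i j : ι} (hadj : Γ.Adj i j) (x : G i) (y : G j)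
    {a t d : Word G} {g : G i} {h : G j} {w : Word G}
    (hdi : HeadAt Γ i a g (t ++ ⟨j, h⟩ :: d) w)
    (hdj : HeadAt Γ j (a ++ ⟨i, g⟩ :: t) h d w) :
    sm Γ i x (sm Γ j y w) = sm Γ j y (sm Γ i x w) := by
  have ha := hdi.2
  have hc := hdj.2
  have hji : Γ.Adj j i := hadj.symm
  have hadj_a : ∀ l ∈ a, Γ.Adj j l.1 := fun l hl => hc l (by simp [hl])
  have hadj_t : ∀ l ∈ t, Γ.Adj j l.1 := fun l hl => hc l (by simp [hl])
  have hcx : ∀ (z : G i) (l : (k : ι) × G k), l ∈ a ++ ⟨i, z⟩ :: t → Γ.Adj j l.1 := by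
    intro z l hl
    rcases List.mem_append.1 hl with hl | hl
    · exact hadj_a l hl
    · rcases List.mem_cons.1 hl with rfl | hl
      · exact hji
      · exact hadj_t l hl
  rw [sm_headAt Γ hdj y, sm_headAt Γ hdi x]
  by_cases hyh : y * h = 1 <;> by_cases hxg : x * g = 1
  · rw [if_pos hyh, if_pos hxg]
    have Hi : HeadAt Γ i a g (t ++ d) ((a ++ ⟨i, g⟩ :: t) ++ d) := ⟨by simp, ha⟩
    have Hj : HeadAt Γ j (a ++ t) h d (a ++ (t ++ ⟨j, h⟩ :: d)) :=
      ⟨by simp, fun l hl => (List.mem_append.1 hl).elim (hadj_a l) (hadj_t l)⟩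
    rw [sm_headAt Γ Hi x, sm_headAt Γ Hj y, if_pos hxg, if_pos hyh]
    simp
  · rw [if_pos hyh, if_neg hxg]
    have Hi : HeadAt Γ i a g (t ++ d) ((a ++ ⟨i, g⟩ :: t) ++ d) := ⟨by simp, ha⟩
    have Hj : HeadAt Γ j (a ++ ⟨i, x * g⟩ :: t) h d (a ++ ⟨i, x * g⟩ :: (t ++ ⟨j, h⟩ :: d)) :=
      ⟨by simp, hcx (x * g)⟩
    rw [sm_headAt Γ Hi x, sm_headAt Γ Hj y, if_neg hxg, if_pos hyh]
    simp
  · rw [if_neg hyh, if_pos hxg]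
    have Hi : HeadAt Γ i a g (t ++ ⟨j, y * h⟩ :: d) ((a ++ ⟨i, g⟩ :: t) ++ ⟨j, y * h⟩ :: d) :=
      ⟨by simp, ha⟩
    have Hj : HeadAt Γ j (a ++ t) h d (a ++ (t ++ ⟨j, h⟩ :: d)) :=
      ⟨by simp, fun l hl => (List.mem_append.1 hl).elim (hadj_a l) (hadj_t l)⟩
    rw [sm_headAt Γ Hi x, sm_headAt Γ Hj y, if_pos hxg, if_neg hyh]
    simp
  · rw [if_neg hyh, if_neg hxg]
    have Hi : HeadAt Γ i a g (t ++ ⟨j, y * h⟩ :: d) ((a ++ ⟨i, g⟩ :: t) ++ ⟨j, y * h⟩ :: d) :=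
      ⟨by simp, ha⟩
    have Hj : HeadAt Γ j (a ++ ⟨i, x * g⟩ :: t) h d (a ++ ⟨i, x * g⟩ :: (t ++ ⟨j, h⟩ :: d)) :=
      ⟨by simp, hcx (x * g)⟩
    rw [sm_headAt Γ Hi x, sm_headAt Γ Hj y, if_neg hxg, if_neg hyh]
    simp

theorem sm_comm_auxB {i j : ι} (hadj : Γ.Adj i j) (x : G i) (y : G j)
    {a b w : Word G} {g : G i} (hw : Reduced Γ w)
    (hdi : HeadAt Γ i a g b w) (hnj : ¬ HasHead Γ j w) :
    sm Γ i x (sm Γ j y w) = sm Γ j y (sm Γ i x w) := by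
  by_cases hy : y = 1
  · subst hy
    rw [sm_one Γ hw, sm_one Γ (reduced_sm Γ x hw)]
  · rw [sm_not Γ hnj y, if_neg hy]
    have Hi : HeadAt Γ i (⟨j, y⟩ :: a) g b (⟨j, y⟩ :: w) := by
      refine ⟨by rw [hdi.1]; rfl, ?_⟩
      intro l hl
      rcases List.mem_cons.1 hl with rfl | hl
      · exact hadj
      · exact hdi.2 l hl
    rw [sm_headAt Γ Hi x, sm_headAt Γ hdi x]
    by_cases hxg : x * g = 1
    · rw [if_pos hxg, if_pos hxg]
      rw [sm_not Γ (not_hasHead_delete' Γ hadj.symm hnj hdi) y, if_neg hy]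
      simp
    · rw [if_neg hxg, if_neg hxg]
      have hveq : vtx w = vtx (a ++ ⟨i, x * g⟩ :: b) := by rw [hdi.1]; simp
      rw [sm_not Γ (not_hasHead_congr Γ hveq hnj) y, if_neg hy]
      simp

theorem sm_comm {i j : ι} (hadj : Γ.Adj i j) (x : G i) (y : G j) {w : Word G}
    (hw : Reduced Γ w) :
    WEquiv Γ (sm Γ i x (sm Γ j y w)) (sm Γ j y (sm Γ i x w)) := by
  by_cases hi : HasHead Γ i w <;> by_cases hj : HasHead Γ j w
  · obtain ⟨a, g, b, hdi⟩ := hi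
    obtain ⟨c, h, d, hdj⟩ := hj
    have hww : a ++ ⟨i, g⟩ :: b = c ++ ⟨j, h⟩ :: d := hdi.1.symm.trans hdj.1
    rcases cons_middle_cases hww with ⟨t, hp, hb⟩ | ⟨h1, h2, h3⟩ | ⟨t, hp, hq⟩
    · subst hp; subst hb
      rw [sm_comm_aux Γ hadj x y hdi hdj]
      exact WEquiv.refl' Γ _
    · exact absurd (congrArg Sigma.fst h2) (Γ.ne_of_adj hadj)
    · subst hp; subst hq
      rw [sm_comm_aux Γ hadj.symm y x hdj hdi]
      exact WEquiv.refl' Γ _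
  · rw [sm_comm_auxB Γ hadj x y hw hi.choose_spec.choose_spec.choose_spec hj]
    exact WEquiv.refl' Γ _
  · rw [← sm_comm_auxB Γ hadj.symm y x hw hj.choose_spec.choose_spec.choose_spec hi]
    exact WEquiv.refl' Γ _
  · rw [sm_not Γ hi x, sm_not Γ hj y]
    by_cases hx : x = 1 <;> by_cases hy : y = 1
    · rw [if_pos hx, if_pos hy, hx, hy, sm_one Γ hw, sm_one Γ hw]
      exact WEquiv.refl' Γ _
    · rw [if_pos hx, if_neg hy, hx]
      have hred : Reduced Γ (⟨j, y⟩ :: w) := by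
        have := reduced_sm Γ y hw
        rwa [sm_not Γ hj y, if_neg hy] at this
      rw [sm_one Γ hred, sm_not Γ hj y, if_neg hy]
      exact WEquiv.refl' Γ _
    · rw [if_neg hx, if_pos hy, hy]
      have hred : Reduced Γ (⟨i, x⟩ :: w) := by
        have := reduced_sm Γ x hw
        rwa [sm_not Γ hi x, if_neg hx] at this
      rw [sm_one Γ hred, sm_not Γ hi x, if_neg hx]
      exact WEquiv.refl' Γ _
    · rw [if_neg hx, if_neg hy]
      have hni : ¬ HasHead Γ i (⟨j, y⟩ :: w) :=
        fun hcon => hi (hasHead_cons Γ (Γ.ne_of_adj hadj.symm) hcon)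
      have hnj : ¬ HasHead Γ j (⟨i, x⟩ :: w) :=
        fun hcon => hj (hasHead_cons Γ (Γ.ne_of_adj hadj) hcon)
      rw [sm_not Γ hni x, if_neg hx, sm_not Γ hnj y, if_neg hy]
      have := (Step.swap (G := G) [] w ⟨i, x⟩ ⟨j, y⟩ hadj).wequiv
      simpa using this

theorem sm_mul {i : ι} (x y : G i) {w : Word G} (hw : Reduced Γ w) :
    WEquiv Γ (sm Γ i x (sm Γ i y w)) (sm Γ i (x * y) w) := by
  by_cases hh : HasHead Γ i w
  · obtain ⟨a, g, b, hd⟩ := hh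
    rw [sm_headAt Γ hd y, sm_headAt Γ hd (x * y)]
    by_cases hyg : y * g = 1
    · rw [if_pos hyg]
      have hng : ¬ HasHead Γ i (a ++ b) := not_hasHead_delete Γ hw hd
      rw [sm_not Γ hng x]
      have hxyg : x * y * g = x := by rw [mul_assoc, hyg, mul_one]
      by_cases hx : x = 1
      · rw [if_pos hx, if_pos (by rw [hxyg, hx])]
        exact WEquiv.refl' Γ _
      · rw [if_neg hx, if_neg (by rw [hxyg]; exact hx), hxyg]
        exact wequiv_shuffle Γ x a b hd.2
    · rw [if_neg hyg]
      have Hd : HeadAt Γ i a (y * g) b (a ++ ⟨i, y * g⟩ :: b) := ⟨rfl, hd.2⟩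
      rw [sm_headAt Γ Hd x]
      by_cases h2 : x * (y * g) = 1
      · rw [if_pos h2, if_pos (by rw [mul_assoc]; exact h2)]
        exact WEquiv.refl' Γ _
      · rw [if_neg h2, if_neg (by rw [mul_assoc]; exact h2), mul_assoc]
        exact WEquiv.refl' Γ _
  · rw [sm_not Γ hh y]
    by_cases hy : y = 1
    · rw [if_pos hy, hy, mul_one]
      exact WEquiv.refl' Γ _
    · rw [if_neg hy]
      have Hd : HeadAt Γ i [] y w (⟨i, y⟩ :: w) := ⟨rfl, by simp⟩
      rw [sm_headAt Γ Hd x, sm_not Γ hh (x * y)]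
      by_cases hxy : x * y = 1
      · rw [if_pos hxy, if_pos hxy]
        exact WEquiv.refl' Γ _
      · rw [if_neg hxy, if_neg hxy]
        exact WEquiv.refl' Γ _

theorem step_hasHead {i : ι} {w w' : Word G} (hs : Step Γ w w') (h : HasHead Γ i w') :
    HasHead Γ i w := by
  cases hs with
  | swap p q l₁ l₂ hl =>
    obtain ⟨a, g, b, hw, ha⟩ := h
    rcases cons_middle_cases (hw.symm : a ++ ⟨i, g⟩ :: b = p ++ l₂ :: (l₁ :: q))
      with ⟨t, hp, hb⟩ | ⟨h1, h2, h3⟩ | ⟨t, hp, hq⟩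
    · -- p = a ++ ⟨i,g⟩ :: t, b = t ++ l₂ :: l₁ :: q; i-letter before the swap
      refine ⟨a, g, t ++ l₁ :: l₂ :: q, by simp [hp], ha⟩
    · -- a = p, ⟨i,g⟩ = l₂, b = l₁ :: q
      obtain ⟨rfl, rfl, rfl⟩ := And.intro h1 (And.intro h2 h3)
      refine ⟨a ++ [l₁], g, q, by simp, ?_⟩
      intro l hl'
      rcases List.mem_append.1 hl' with hl' | hl'
      · exact ha l hl'
      · rcases List.mem_cons.1 hl' with rfl | hl'
        · exact hl.symm
        · simp at hl'
    · -- a = p ++ l₂ :: t, l₁ :: q = t ++ ⟨i,g⟩ :: b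
      cases t with
      | nil =>
        rw [List.nil_append] at hq
        injection hq with e1 e2
        refine ⟨p, g, l₂ :: b, ?_, fun l hl' => ha l (by simp [hp, hl'])⟩
        rw [e1, e2]
      | cons m t' =>
        rw [List.cons_append] at hq
        injection hq with e1 e2
        subst e1
        refine ⟨p ++ l₁ :: l₂ :: t', g, b, by simp [e2], ?_⟩
        intro l hl'
        refine ha l ?_
        rw [hp]
        simp only [List.mem_append, List.mem_cons] at hl' ⊢
        tauto

theorem sm_step {i : ι} (x : G i) {w w' : Word G} (hs : Step Γ w w') :
    WEquiv Γ (sm Γ i x w) (sm Γ i x w') := by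
  by_cases hh : HasHead Γ i w
  · obtain ⟨a, g, b, hd, ha⟩ := hh
    cases hs with
    | swap p q l₁ l₂ hladj =>
      -- hd : p ++ l₁ :: l₂ :: q = a ++ ⟨i,g⟩ :: b
      rcases cons_middle_cases (hd : p ++ l₁ :: (l₂ :: q) = a ++ ⟨i, g⟩ :: b)
        with ⟨t, hp, hb⟩ | ⟨h1, h2, h3⟩ | ⟨t, hp, hq⟩
      · -- a = p ++ l₁ :: t, l₂ :: q = t ++ ⟨i,g⟩ :: b
        cases t with
        | nil =>
          rw [List.nil_append] at hb
          injection hb with e1 e2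
          have Hd : HeadAt Γ i (p ++ [l₁]) g b (p ++ l₁ :: l₂ :: q) :=
            ⟨by simp [e1, e2], fun l hl => ha l (by rw [hp]; simpa using hl)⟩
          have Hd' : HeadAt Γ i p g (l₁ :: b) (p ++ l₂ :: l₁ :: q) :=
            ⟨by simp [e1, e2], fun l hl => ha l (by rw [hp]; simp [hl])⟩
          rw [sm_headAt Γ Hd x, sm_headAt Γ Hd' x]
          by_cases hxg : x * g = 1
          · rw [if_pos hxg, if_pos hxg]
            simp only [List.append_assoc, List.singleton_append]
            exact WEquiv.refl' Γ _
          · rw [if_neg hxg, if_neg hxg]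
            have hadj' : Γ.Adj l₁.1 i := (ha l₁ (by rw [hp]; simp)).symm
            have := (Step.swap (G := G) p b l₁ ⟨i, x * g⟩ hadj').wequiv
            simpa using this
        | cons m t' =>
          rw [List.cons_append] at hb
          injection hb with e1 e2
          subst e1
          -- a = p ++ l₁ :: l₂ :: t', q = t' ++ ⟨i,g⟩ :: b
          have Hd : HeadAt Γ i (p ++ l₁ :: l₂ :: t') g b (p ++ l₁ :: l₂ :: q) :=
            ⟨by simp [e2], fun l hl => ha l (by rw [hp]; exact hl)⟩
          have Hd' : HeadAt Γ i (p ++ l₂ :: l₁ :: t') g b (p ++ l₂ :: l₁ :: q) := by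
            refine ⟨by simp [e2], fun l hl => ha l ?_⟩
            rw [hp]
            simp only [List.mem_append, List.mem_cons] at hl ⊢
            tauto
          rw [sm_headAt Γ Hd x, sm_headAt Γ Hd' x]
          by_cases hxg : x * g = 1
          · rw [if_pos hxg, if_pos hxg]
            have := (Step.swap (G := G) p (t' ++ b) l₁ l₂ hladj).wequiv
            simpa using this
          · rw [if_neg hxg, if_neg hxg]
            have := (Step.swap (G := G) p (t' ++ ⟨i, x * g⟩ :: b) l₁ l₂ hladj).wequiv
            simpa using this
      · -- p = a, l₁ = ⟨i,g⟩, l₂ :: q = b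
        have Hd : HeadAt Γ i a g b (p ++ l₁ :: l₂ :: q) := ⟨hd, ha⟩
        have Hd' : HeadAt Γ i (a ++ [l₂]) g q (p ++ l₂ :: l₁ :: q) := by
          have hadj2 : Γ.Adj (⟨i, g⟩ : (k : ι) × G k).1 l₂.1 := h2 ▸ hladj
          refine ⟨by rw [h1, h2]; simp, ?_⟩
          intro l hl
          rcases List.mem_append.1 hl with hl | hl
          · exact ha l hl
          · rcases List.mem_cons.1 hl with rfl | hl
            · exact hadj2
            · simp at hl
        rw [sm_headAt Γ Hd x, sm_headAt Γ Hd' x]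
        by_cases hxg : x * g = 1
        · rw [if_pos hxg, if_pos hxg, ← h3]
          simp only [List.append_assoc, List.singleton_append]
          exact WEquiv.refl' Γ _
        · rw [if_neg hxg, if_neg hxg, ← h3]
          have hadj' : Γ.Adj i l₂.1 := (show Γ.Adj (⟨i, g⟩ : (k : ι) × G k).1 l₂.1 from h2 ▸ hladj)
          have := (Step.swap (G := G) a q ⟨i, x * g⟩ l₂ hadj').wequiv
          simpa using this
      · -- p = a ++ ⟨i,g⟩ :: t, b = t ++ l₁ :: l₂ :: q
        have Hd : HeadAt Γ i a g b (p ++ l₁ :: l₂ :: q) := ⟨hd, ha⟩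
        have Hd' : HeadAt Γ i a g (t ++ l₂ :: l₁ :: q) (p ++ l₂ :: l₁ :: q) :=
          ⟨by rw [hp]; simp, ha⟩
        rw [sm_headAt Γ Hd x, sm_headAt Γ Hd' x]
        by_cases hxg : x * g = 1
        · rw [if_pos hxg, if_pos hxg, hq]
          have := (Step.swap (G := G) (a ++ t) q l₁ l₂ hladj).wequiv
          simpa using this
        · rw [if_neg hxg, if_neg hxg, hq]
          have := (Step.swap (G := G) (a ++ ⟨i, x * g⟩ :: t) q l₁ l₂ hladj).wequiv
          simpa using this
  · have hh' : ¬ HasHead Γ i w' := fun h' => hh (step_hasHead Γ hs h')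
    rw [sm_not Γ hh x, sm_not Γ hh' x]
    by_cases hx : x = 1
    · rw [if_pos hx, if_pos hx]
      exact hs.wequiv
    · rw [if_neg hx, if_neg hx]
      exact (Step.cons Γ _ hs).wequiv

theorem sm_wequiv {i : ι} (x : G i) {w w' : Word G} (he : WEquiv Γ w w') :
    WEquiv Γ (sm Γ i x w) (sm Γ i x w') := by
  induction he with
  | refl => exact WEquiv.refl' Γ _
  | tail h1 h2 ih => exact WEquiv.trans' Γ ih (sm_step Γ x h2)

/-! ### Reduced word classes and basic reducedness facts -/

theorem reduced_nil : Reduced Γ ([] : Word G) := by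
  constructor
  · intro l hl; simp at hl
  · rintro ⟨i, c, d, e, h, -⟩
    simp at h

theorem reduced_tail {l : (i : ι) × G i} {w : Word G} (h : Reduced Γ (l :: w)) :
    Reduced Γ w := by
  refine ⟨fun m hm => h.1 m (by simp [hm]), fun hb => h.2 ?_⟩
  rw [vtx_cons]
  exact bad_cons Γ hb

theorem reduced_cons_not_hasHead {i : ι} {g : G i} {w : Word G}
    (h : Reduced Γ (⟨i, g⟩ :: w)) : ¬ HasHead Γ i w := by
  rintro ⟨a, g', b, hw, ha⟩
  refine h.2 ⟨i, [], vtx a, vtx b, ?_, ?_⟩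
  · rw [vtx_cons, hw]; simp
  · intro j hj
    obtain ⟨l, hl, rfl⟩ := mem_vtx.1 hj
    exact ha l hl

variable (G) in
/-- Reduced words. -/
abbrev RWord : Type _ := {w : Word G // Reduced Γ w}

variable (G) in
instance rwordSetoid : Setoid (RWord Γ G) :=
  ⟨fun w w' => WEquiv Γ w.1 w'.1,
   ⟨fun w => WEquiv.refl' Γ _, fun h => WEquiv.symm' Γ h, fun h h' => WEquiv.trans' Γ h h'⟩⟩

variable (G) in
/-- Shuffle classes of reduced words. -/
abbrev RClass : Type _ := Quotient (rwordSetoid Γ G)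

variable (G) in
noncomputable def smFun (i : ι) (x : G i) : RClass Γ G → RClass Γ G :=
  Quotient.map (fun w => ⟨sm Γ i x w.1, reduced_sm Γ x w.2⟩)
    (fun _ _ h => sm_wequiv Γ x h)

theorem smFun_mk (i : ι) (x : G i) (w : RWord Γ G) :
    smFun Γ G i x (Quotient.mk _ w) = Quotient.mk _ ⟨sm Γ i x w.1, reduced_sm Γ x w.2⟩ := rfl

theorem smFun_one_apply (i : ι) (c : RClass Γ G) : smFun Γ G i 1 c = c := by
  induction c using Quotient.ind with
  | _ w => exact congrArg _ (Subtype.ext (sm_one Γ w.2))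

theorem smFun_mul_apply (i : ι) (x y : G i) (c : RClass Γ G) :
    smFun Γ G i x (smFun Γ G i y c) = smFun Γ G i (x * y) c := by
  induction c using Quotient.ind with
  | _ w => exact Quotient.sound (sm_mul Γ x y w.2)

theorem smFun_comm_apply {i j : ι} (hadj : Γ.Adj i j) (x : G i) (y : G j) (c : RClass Γ G) :
    smFun Γ G i x (smFun Γ G j y c) = smFun Γ G j y (smFun Γ G i x c) := by
  induction c using Quotient.ind with
  | _ w => exact Quotient.sound (sm_comm Γ hadj x y w.2)

variable (G) in
/-- The action of the vertex group `G i` on shuffle classes of reduced words. -/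
noncomputable def rho (i : ι) : G i →* Equiv.Perm (RClass Γ G) where
  toFun x :=
    { toFun := smFun Γ G i x
      invFun := smFun Γ G i x⁻¹
      left_inv := fun c => by
        rw [smFun_mul_apply, inv_mul_cancel, smFun_one_apply]
      right_inv := fun c => by
        rw [smFun_mul_apply, mul_inv_cancel, smFun_one_apply] }
  map_one' := Equiv.ext fun c => smFun_one_apply Γ i c
  map_mul' x y := Equiv.ext fun c => (smFun_mul_apply Γ i x y c).symm

theorem rho_apply (i : ι) (x : G i) (c : RClass Γ G) : rho Γ G i x c = smFun Γ G i x c := rfl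

theorem rho_comm {i j : ι} (hadj : Γ.Adj i j) (x : G i) (y : G j) :
    Commute (rho Γ G i x) (rho Γ G j y) := by
  apply Equiv.ext
  intro c
  simp only [Equiv.Perm.mul_apply, rho_apply]
  exact smFun_comm_apply Γ hadj x y c

end Words


section GP

variable {ι : Type*} (Γ : SimpleGraph ι) (G : ι → Type*) [∀ i, Group (G i)]

/-- The subgroup of relations defining the graph product. -/
def NRel : Subgroup (CoprodI G) :=
  Subgroup.normalClosure
    {x : CoprodI G | ∃ (i j : ι) (a : G i) (b : G j), Γ.Adj i j ∧
      x = ⁅CoprodI.of a, CoprodI.of b⁆}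

instance : (NRel Γ G).Normal := Subgroup.normalClosure_normal

theorem of_commute {i j : ι} (hadj : Γ.Adj i j) (a : G i) (b : G j) :
    Commute (GraphProduct.of Γ G i a) (GraphProduct.of Γ G j b) := by
  rw [← commutatorElement_eq_one_iff_commute]
  have h1 : ⁅GraphProduct.of Γ G i a, GraphProduct.of Γ G j b⁆
      = (QuotientGroup.mk' (NRel Γ G)) ⁅CoprodI.of a, CoprodI.of b⁆ :=
    (map_commutatorElement (QuotientGroup.mk' (NRel Γ G)) (CoprodI.of a) (CoprodI.of b)).symm
  rw [h1, QuotientGroup.mk'_apply]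
  exact (QuotientGroup.eq_one_iff _).2 (Subgroup.subset_normalClosure ⟨i, j, a, b, hadj, rfl⟩)

/-- Universal property of the graph product. -/
def glift {K : Type*} [Group K] (f : ∀ i, G i →* K)
    (hf : ∀ ⦃i j⦄, Γ.Adj i j → ∀ a b, Commute (f i a) (f j b)) :
    GraphProduct Γ G →* K :=
  QuotientGroup.lift (NRel Γ G) (CoprodI.lift f)
    (Subgroup.normalClosure_le_normal (by
      rintro x ⟨i, j, a, b, hadj, rfl⟩
      rw [SetLike.mem_coe, MonoidHom.mem_ker, map_commutatorElement,
        CoprodI.lift_of, CoprodI.lift_of]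
      exact commutatorElement_eq_one_iff_commute.2 (hf hadj a b)))

theorem glift_of {K : Type*} [Group K] (f : ∀ i, G i →* K)
    (hf : ∀ ⦃i j⦄, Γ.Adj i j → ∀ a b, Commute (f i a) (f j b)) (i : ι) (g : G i) :
    glift Γ G f hf (GraphProduct.of Γ G i g) = f i g := by
  have h1 : glift Γ G f hf (GraphProduct.of Γ G i g) = CoprodI.lift f (CoprodI.of g) := rfl
  rw [h1, CoprodI.lift_of]

/-- The product in the graph product of the letters of a word. -/
def wprod (w : Word G) : GraphProduct Γ G :=
  (w.map fun l => GraphProduct.of Γ G l.1 l.2).prod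

@[simp] theorem wprod_nil : wprod Γ G ([] : Word G) = 1 := rfl

@[simp] theorem wprod_cons (l : (i : ι) × G i) (w : Word G) :
    wprod Γ G (l :: w) = GraphProduct.of Γ G l.1 l.2 * wprod Γ G w := by
  simp [wprod]

@[simp] theorem wprod_append (u v : Word G) :
    wprod Γ G (u ++ v) = wprod Γ G u * wprod Γ G v := by
  simp [wprod]

/-- The permutation representation of the graph product on shuffle classes. -/
noncomputable def theta : GraphProduct Γ G →* Equiv.Perm (RClass Γ G) :=
  glift Γ G (rho Γ G) (fun _ _ hadj a b => rho_comm Γ hadj a b)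

theorem theta_wprod {w : Word G} (hw : Reduced Γ w) :
    theta Γ G (wprod Γ G w) (Quotient.mk _ (⟨[], reduced_nil Γ⟩ : RWord Γ G))
      = Quotient.mk _ (⟨w, hw⟩ : RWord Γ G) := by
  induction w with
  | nil =>
    rw [wprod_nil, map_one, Equiv.Perm.one_apply]
  | cons l w ih =>
    obtain ⟨i, g⟩ := l
    have hw' := reduced_tail Γ hw
    rw [wprod_cons, map_mul, Equiv.Perm.mul_apply, ih hw', theta, glift_of, rho_apply, smFun_mk]
    have hsm : sm Γ i g w = ⟨i, g⟩ :: w := by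
      rw [sm_not Γ (reduced_cons_not_hasHead Γ hw) g,
        if_neg (hw.1 ⟨i, g⟩ (by simp))]
    exact congrArg _ (Subtype.ext hsm)

theorem wprod_ne_one {w : Word G} (hw : Reduced Γ w) (hne : w ≠ []) :
    wprod Γ G w ≠ 1 := by
  intro h
  have h2 := theta_wprod Γ G hw
  rw [h, map_one, Equiv.Perm.one_apply] at h2
  exact hne (WEquiv.eq_nil Γ (WEquiv.symm' Γ (Quotient.exact h2)))

theorem exists_word (x : GraphProduct Γ G) : ∃ w : Word G, wprod Γ G w = x := by
  obtain ⟨y, rfl⟩ := QuotientGroup.mk'_surjective (NRel Γ G) x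
  induction y using CoprodI.induction_on with
  | one => exact ⟨[], (map_one _).symm⟩
  | of i m => exact ⟨[⟨i, m⟩], by simp [wprod]; rfl⟩
  | mul x y ihx ihy =>
    obtain ⟨wx, hx⟩ := ihx
    obtain ⟨wy, hy⟩ := ihy
    exact ⟨wx ++ wy, by rw [wprod_append, hx, hy, map_mul]; rfl⟩

theorem of_comm_wprod {i : ι} (g : G i) {d : Word G} (hd : ∀ l ∈ d, Γ.Adj i l.1) :
    Commute (GraphProduct.of Γ G i g) (wprod Γ G d) := by
  induction d with
  | nil => rw [wprod_nil]; exact Commute.one_right _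
  | cons l d ih =>
    rw [wprod_cons]
    exact Commute.mul_right (of_commute Γ G (hd l (by simp)) g l.2)
      (ih fun m hm => hd m (by simp [hm]))

theorem exists_reduced_word (w : Word G) :
    ∃ w', Reduced Γ w' ∧ wprod Γ G w' = wprod Γ G w := by
  generalize hn : w.length = n
  induction n using Nat.strong_induction_on generalizing w with
  | _ n ih =>
  by_cases hred : Reduced Γ w
  · exact ⟨w, hred, rfl⟩
  rcases not_and_or.1 hred with h1 | h2
  · push_neg at h1
    obtain ⟨l, hl, hl1⟩ := h1
    obtain ⟨s, t, rfl⟩ := List.append_of_mem hl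
    have hlen : (s ++ t).length < n := by subst hn; simp
    obtain ⟨w', hw', he⟩ := ih _ hlen (s ++ t) rfl
    refine ⟨w', hw', he.trans ?_⟩
    simp [hl1]
  · obtain ⟨i, C, D, E, hV, hD⟩ := not_not.1 h2
    obtain ⟨a, g, b, rfl, hCa, hV2⟩ := vtx_split hV
    obtain ⟨d, g', e, rfl, hDd, hEe⟩ := vtx_split hV2
    have hd' : ∀ l ∈ d, Γ.Adj i l.1 := fun l hl => hD l.1 (hDd ▸ mem_vtx.2 ⟨l, hl, rfl⟩)
    have hlen : (a ++ ⟨i, g * g'⟩ :: (d ++ e)).length < n := by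
      subst hn; simp
    obtain ⟨w', hw', he⟩ := ih _ hlen (a ++ ⟨i, g * g'⟩ :: (d ++ e)) rfl
    refine ⟨w', hw', he.trans ?_⟩
    have hc : GraphProduct.of Γ G i g' * wprod Γ G d = wprod Γ G d * GraphProduct.of Γ G i g' :=
      (of_comm_wprod Γ G g' hd').eq
    simp only [wprod_append, wprod_cons, map_mul, mul_assoc]
    congr 1
    congr 1
    rw [← mul_assoc, ← mul_assoc, hc]

end GP

section Sub

variable {ι : Type*} (Γ : SimpleGraph ι) (G : ι → Type*) [∀ i, Group (G i)]
variable (H : ∀ i, Subgroup (G i))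

/-- Translating words over the subgroups into words over the ambient groups. -/
def mapWord (w : Word (fun i => ↥(H i))) : Word G :=
  w.map fun l => ⟨l.1, (l.2 : G l.1)⟩

@[simp] theorem vtx_mapWord (w : Word (fun i => ↥(H i))) : vtx (mapWord G H w) = vtx w := by
  induction w with
  | nil => rfl
  | cons l w ih => simp [mapWord, vtx, Function.comp]

theorem reduced_mapWord {w : Word (fun i => ↥(H i))} (hw : Reduced Γ w) :
    Reduced Γ (mapWord G H w) := by
  constructor
  · intro l hl
    obtain ⟨m, hm, rfl⟩ := List.mem_map.1 hl
    intro hc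
    exact hw.1 m hm (by ext; exact hc)
  · rw [vtx_mapWord]
    exact hw.2

/-- The natural map between graph products induced by the inclusions `H i ≤ G i`. -/
def psi : GraphProduct Γ (fun i => ↥(H i)) →* GraphProduct Γ G :=
  glift Γ (fun i => ↥(H i)) (fun i => (GraphProduct.of Γ G i).comp (H i).subtype)
    (fun _ _ hadj a b => of_commute Γ G hadj (a : G _) (b : G _))

theorem psi_of (i : ι) (h : ↥(H i)) :
    psi Γ G H (GraphProduct.of Γ (fun i => ↥(H i)) i h) = GraphProduct.of Γ G i (h : G i) :=
  glift_of Γ (fun i => ↥(H i)) _ _ i h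

theorem psi_wprod (w : Word (fun i => ↥(H i))) :
    psi Γ G H (wprod Γ (fun i => ↥(H i)) w) = wprod Γ G (mapWord G H w) := by
  induction w with
  | nil => simp [mapWord]
  | cons l w ih =>
    rw [wprod_cons, map_mul, ih, psi_of]
    simp [mapWord]

end Sub

end GPAux

/-- Graph products of subgroups embed: if `Γ` is a finite graph with vertex groups `G i`
and `H i ≤ G i` are subgroups, then the graph product of the `H i` embeds into the graph
product of the `G i` via the natural map (sending the copy of `H i` into the copy of
`G i`). -/
theorem stmt13 {ι : Type*} [Fintype ι] (Γ : SimpleGraph ι) (G : ι → Type*)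
    [∀ i, Group (G i)] (H : ∀ i, Subgroup (G i)) :
    ∃ ψ : GraphProduct Γ (fun i => ↥(H i)) →* GraphProduct Γ G,
      Function.Injective ψ ∧
      ∀ (i : ι) (h : ↥(H i)),
        ψ (GraphProduct.of Γ (fun i => ↥(H i)) i h) = GraphProduct.of Γ G i (h : G i) := by
  classical
  refine ⟨GPAux.psi Γ G H, ?_, fun i h => GPAux.psi_of Γ G H i h⟩
  rw [injective_iff_map_eq_one]
  intro x hx
  obtain ⟨w, rfl⟩ := GPAux.exists_word Γ (fun i => ↥(H i)) x
  obtain ⟨w', hw', he⟩ := GPAux.exists_reduced_word Γ (fun i => ↥(H i)) w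
  rw [← he] at hx ⊢
  rcases eq_or_ne w' [] with rfl | hne
  · exact GPAux.wprod_nil Γ (fun i => ↥(H i))
  · exfalso
    rw [GPAux.psi_wprod] at hx
    refine GPAux.wprod_ne_one Γ G (GPAux.reduced_mapWord Γ G H hw') ?_ hx
    simp [GPAux.mapWord, hne]
end
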